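/- Let P(x) = (x-a)(x-b)(x-c)(x-d) with a, b, c, d distinct, and let T be the Möbius involution T(x) = (-(ab-cd)x + (abc+abd-acd-bcd))/(-(a+b-c-d)x + (ab-cd)). Then P(T(x)) = C(x)^4 P(x), where C(x)^4 = (a-c)^2 (a-d)^2 (b-c)^2 (b-d)^2 / ((a+b-c-d)x - (ab-cd))^4. -/

import Mathlib

/-- For `P(x) = (x-a)(x-b)(x-c)(x-d)` with distinct roots and the Möbius
involution `T`, one has `P(T(x)) = C(x)^4 P(x)` with
`C(x)^4 = (a-c)^2 (a-d)^2 (b-c)^2 (b-d)^2 / ((a+b-c-d)x - (ab-cd))^4`. -/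
theorem quartic_transforms_under_involution
    {K : Type*} [Field K] [CharZero K] (a b c d : K)
    (hab : a ≠ b) (hac : a ≠ c) (had : a ≠ d) (hbc : b ≠ c) (hbd : b ≠ d) (hcd : c ≠ d)
    (P T : K → K)
    (hP : ∀ x, P x = (x - a) * (x - b) * (x - c) * (x - d))
    (hT : ∀ x, T x =
      (-(a * b - c * d) * x + (a * b * c + a * b * d - a * c * d - b * c * d))
        / (-(a + b - c - d) * x + (a * b - c * d))) :
    ∀ x, (a + b - c - d) * x - (a * b - c * d) ≠ 0 →
      P (T x) = (a - c) ^ 2 * (a - d) ^ 2 * (b - c) ^ 2 * (b - d) ^ 2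
        / ((a + b - c - d) * x - (a * b - c * d)) ^ 4 * P x := by
  intro x hx
  set D : K := -(a + b - c - d) * x + (a * b - c * d) with hD
  have hD0 : D ≠ 0 := by
    intro h; apply hx; rw [hD] at h; linear_combination -h
  have h1 : T x - a = (a - c) * (a - d) * (x - b) / D := by
    rw [hT]
    rw [div_sub' hD0]
    congr 1; ring
  have h2 : T x - b = (b - c) * (b - d) * (x - a) / D := by
    rw [hT]
    rw [div_sub' hD0]
    congr 1; ring
  have h3 : T x - c = -((a - c) * (b - c) * (x - d)) / D := by
    rw [hT]
    rw [div_sub' hD0]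
    congr 1; ring
  have h4 : T x - d = -((a - d) * (b - d) * (x - c)) / D := by
    rw [hT]
    rw [div_sub' hD0]
    congr 1; ring
  rw [hP (T x), h1, h2, h3, h4, hP x]
  rw [div_mul_div_comm, div_mul_div_comm, div_mul_div_comm, div_mul_eq_mul_div]
  have hden : D * D * D * D = ((a + b - c - d) * x - (a * b - c * d)) ^ 4 := by
    rw [hD]; ring
  rw [hden]
  congr 1
  ring
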